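/- Let κ be an infinite cardinal and let T be a well-pruned κ⁺-Aronszajn tree. Then for every node t ∈ T there exists an ordinal α with ht(t) < α < κ⁺ such that the set {y ∈ T : t < y and ht(y) = α} of nodes of T above t at level α has cardinality exactly κ (in particular, the α-th level of T has cardinality exactly κ). -/

import Mathlib

open Cardinal Order Set

/-- `ht` is the height function of the tree `(T, <)`: for every `x : T`, the map `ht`
restricted to the set `{y | y < x}` of predecessors of `x` is an order isomorphism onto
the ordinals below `ht x`; equivalently, the predecessors of each node are linearly
ordered and well-ordered by `<` with order type `ht x`. -/
structure IsHeightFunction (T : Type*) [PartialOrder T] (ht : T → Ordinal) : Prop where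
  /-- `ht` is strictly increasing on chains of the tree. -/
  lt_of_lt : ∀ {y x : T}, y < x → ht y < ht x
  /-- among predecessors of a fixed node, smaller height means smaller node
  (so predecessors are linearly ordered and `ht` reflects the order). -/
  lt_of_ht_lt : ∀ {x y z : T}, y < x → z < x → ht y < ht z → y < z
  /-- every ordinal below `ht x` is the height of some predecessor of `x`. -/
  surj_on : ∀ x : T, ∀ β < ht x, ∃ y : T, y < x ∧ ht y = β

universe u

namespace AronszajnAux

variable {T : Type u} [PartialOrder T] {ht : T → Ordinal.{u}}

theorem exists_split (κ : Cardinal.{u}) (hκ : ℵ₀ ≤ κ) (hht : IsHeightFunction T ht)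
    (hlt : ∀ x : T, ht x < (Order.succ κ).ord)
    (hpruned : ∀ x : T, ∀ α : Ordinal, ht x < α → α < (Order.succ κ).ord →
      ∃ y : T, x < y ∧ ht y = α)
    (haronszajn : ¬ ∃ B : Set T, IsChain (· ≤ ·) B ∧
      ∀ α < (Order.succ κ).ord, ∃ x ∈ B, ht x = α)
    (x : T) :
    ∃ u v q : T, x < u ∧ x < v ∧ ht u = ht v ∧ q < u ∧ ht x < ht q ∧ ¬ q < v := by
  by_contra hcon
  push_neg at hcon
  -- hcon : ∀ u v q, x < u → x < v → ht u = ht v → q < u → ht x < ht q → q < v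
  apply haronszajn
  have hΛ : IsSuccLimit ((Order.succ κ).ord) := Cardinal.isSuccLimit_ord (hκ.trans (le_succ κ))
  have key : ∀ α : Ordinal, α < (Order.succ κ).ord → ∃ y : T, ht y = α ∧
      (y ≤ x ∨ (x < y ∧ ∃ w, x < w ∧ y < w ∧ ht w = Order.succ (ht y))) := by
    intro α hα
    rcases lt_trichotomy α (ht x) with h | h | h
    · obtain ⟨y, hy1, hy2⟩ := hht.surj_on x α h
      exact ⟨y, hy2, Or.inl hy1.le⟩
    · exact ⟨x, h.symm, Or.inl le_rfl⟩
    · obtain ⟨w, hw1, hw2⟩ := hpruned x (Order.succ α) (h.trans (lt_succ α)) (hΛ.succ_lt hα)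
      obtain ⟨y, hy1, hy2⟩ := hht.surj_on w α (by rw [hw2]; exact lt_succ α)
      refine ⟨y, hy2, Or.inr ⟨hht.lt_of_ht_lt hw1 hy1 (by rw [hy2]; exact h), w, hw1, hy1, by
        rw [hw2, hy2]⟩⟩
  have hlp : ∀ {y y' : T},
      (y ≤ x ∨ (x < y ∧ ∃ w, x < w ∧ y < w ∧ ht w = Order.succ (ht y))) →
      (y' ≤ x ∨ (x < y' ∧ ∃ w, x < w ∧ y' < w ∧ ht w = Order.succ (ht y'))) →
      ht y < ht y' → y < y' := by
    rintro y y' hy hy' hlt'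
    rcases hy' with hy' | ⟨hxy', w', hxw', hy'w', hw'⟩
    · -- y' ≤ x
      have hy'x : ht y' ≤ ht x := by
        rcases eq_or_lt_of_le hy' with rfl | h
        · exact le_rfl
        · exact (hht.lt_of_lt h).le
      rcases hy with hy | ⟨hxy, _⟩
      · have hyx : y < x := by
          rcases eq_or_lt_of_le hy with rfl | h
          · exact absurd (hlt'.trans_le hy'x) (lt_irrefl _)
          · exact h
        rcases eq_or_lt_of_le hy' with rfl | hy'ltx
        · exact hyx
        · exact hht.lt_of_ht_lt hyx hy'ltx hlt'
      · exact absurd ((hht.lt_of_lt hxy).trans (hlt'.trans_le hy'x)) (lt_irrefl _)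
    · rcases hy with hy | ⟨hxy, w, hxw, hyw, hw⟩
      · exact lt_of_le_of_lt hy hxy'
      · have hww' : ht w < ht w' := by
          rw [hw, hw']; exact succ_lt_succ hlt'
        obtain ⟨p, hp1, hp2⟩ := hht.surj_on w' (ht w) hww'
        have hxp : x < p := hht.lt_of_ht_lt hxw' hp1 (by
          rw [hp2, hw]; exact (hht.lt_of_lt hxy).trans (lt_succ _))
        have hyp : y < p := hcon w p y hxw hxp (by rw [hp2]) hyw (hht.lt_of_lt hxy)
        exact hht.lt_of_ht_lt (hyp.trans hp1) hy'w' hlt'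
  refine ⟨{y | ∃ α : Ordinal, ∃ hα : α < (Order.succ κ).ord, y = (key α hα).choose}, ?_, ?_⟩
  · rintro y ⟨α, hα, rfl⟩ y' ⟨α', hα', rfl⟩ hne
    have h1 := (key α hα).choose_spec
    have h2 := (key α' hα').choose_spec
    rcases lt_trichotomy α α' with h | h | h
    · exact Or.inl (hlp h1.2 h2.2 (by rw [h1.1, h2.1]; exact h)).le
    · subst h; exact absurd rfl hne
    · exact Or.inr (hlp h2.2 h1.2 (by rw [h1.1, h2.1]; exact h)).le
  · intro α hα
    exact ⟨(key α hα).choose, ⟨α, hα, rfl⟩, (key α hα).choose_spec.1⟩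

end AronszajnAux

/-- Let `κ` be an infinite cardinal and let `T` be a well-pruned `κ⁺`-Aronszajn tree
(all elements have height `< κ⁺`, every level `α < κ⁺` is nonempty, every level has
cardinality at most `κ`, `T` is well-pruned, and `T` has no cofinal branch).
Then for every node `t ∈ T` there is an ordinal `α` with `ht t < α < κ⁺` such that the
set of nodes of `T` above `t` at level `α` has cardinality exactly `κ` (in particular
the `α`-th level of `T` has cardinality exactly `κ`). -/
theorem wellPruned_aronszajn_exists_large_level (κ : Cardinal) (hκ : ℵ₀ ≤ κ)
    {T : Type*} [PartialOrder T] (ht : T → Ordinal)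
    (hht : IsHeightFunction T ht)
    (hlt : ∀ x : T, ht x < (Order.succ κ).ord)
    (hlevels_ne : ∀ α < (Order.succ κ).ord, ∃ x : T, ht x = α)
    (hlevels_card : ∀ α : Ordinal, #{x : T // ht x = α} ≤ κ)
    (hpruned : ∀ x : T, ∀ α : Ordinal, ht x < α → α < (Order.succ κ).ord →
      ∃ y : T, x < y ∧ ht y = α)
    (haronszajn : ¬ ∃ B : Set T, IsChain (· ≤ ·) B ∧
      ∀ α < (Order.succ κ).ord, ∃ x ∈ B, ht x = α)
    (t : T) :
    ∃ α : Ordinal, ht t < α ∧ α < (Order.succ κ).ord ∧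
      #{y : T // t < y ∧ ht y = α} = κ ∧ #{y : T // ht y = α} = κ := by
  set Λ := (Order.succ κ).ord with hΛdef
  have hΛ : IsSuccLimit Λ := Cardinal.isSuccLimit_ord (hκ.trans (le_succ κ))
  have hcof : Λ.cof = Order.succ κ := (isRegular_succ hκ).cof_eq
  -- choice functions
  choose xF hx1 hx2 using hpruned t
  choose uF vF qF hu hv huv hq hxq hqv using
    AronszajnAux.exists_split κ hκ hht hlt hpruned haronszajn
  choose zF hz1 hz2 using hpruned
  set F : Ordinal → Ordinal := fun γ =>
    if h : ht t < γ ∧ γ < Λ then Order.succ (γ ⊔ ht (uF (xF γ h.1 h.2))) else Order.succ γ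
    with hF
  have hFgt : ∀ γ, γ < F γ := by
    intro γ
    rw [hF]
    dsimp only
    split
    · exact (le_sup_left).trans_lt (lt_succ _)
    · exact lt_succ _
  have hFlt : ∀ γ, γ < Λ → F γ < Λ := by
    intro γ hγ
    rw [hF]
    dsimp only
    split
    · exact hΛ.succ_lt (sup_lt_iff.2 ⟨hγ, hlt _⟩)
    · exact hΛ.succ_lt hγ
  set β : Ordinal → Ordinal := fun i =>
    Ordinal.limitRecOn i (ht t + 1) (fun _ ih => F ih) (fun o _ ih => Ordinal.bsup.{_,0} o ih)
    with hβ
  have hβ0 : β 0 = ht t + 1 := Ordinal.limitRecOn_zero _ _ _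
  have hβs : ∀ i, β (Order.succ i) = F (β i) := fun i => Ordinal.limitRecOn_succ _ _ _ _
  have hβl : ∀ o, IsSuccLimit o → β o = Ordinal.bsup o (fun a _ => β a) :=
    fun o ho => Ordinal.limitRecOn_limit _ _ _ _ ho
  have hβinv : ∀ i, i ≤ κ.ord → ht t < β i ∧ β i < Λ := by
    intro i
    induction i using Ordinal.limitRecOn with
    | zero =>
      intro _
      rw [hβ0, Ordinal.add_one_eq_succ]
      exact ⟨lt_succ _, hΛ.succ_lt (hlt t)⟩
    | add_one i IH =>
      rw [Ordinal.add_one_eq_succ]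
      intro hle
      have hi : i ≤ κ.ord := ((lt_succ i).trans_le hle).le
      obtain ⟨h1, h2⟩ := IH hi
      rw [hβs]
      exact ⟨h1.trans (hFgt _), hFlt _ h2⟩
    | limit o ho IH =>
      intro hle
      rw [hβl o ho]
      constructor
      · exact ((IH 0 ho.pos bot_le).1).trans_le (Ordinal.le_bsup _ 0 ho.pos)
      · refine Ordinal.bsup_lt_ord ?_ (fun i hi => (IH i hi (hi.le.trans hle)).2)
        rw [hcof]
        exact ((Ordinal.card_le_card hle).trans_eq (card_ord κ)).trans_lt (lt_succ κ)
  have hβmono : ∀ j i, i < j → β i < β j := by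
    intro j
    induction j using Ordinal.limitRecOn with
    | zero => intro i hi; exact absurd hi not_lt_zero
    | add_one j IH =>
      rw [Ordinal.add_one_eq_succ]
      intro i hi
      rcases (lt_succ_iff.1 hi).lt_or_eq with h | h
      · exact (IH i h).trans ((hFgt _).trans_eq (hβs j).symm)
      · rw [h, hβs]; exact hFgt _
    | limit o ho IH =>
      intro i hi
      have h1 : β i < β (Order.succ i) := by rw [hβs]; exact hFgt _
      exact h1.trans_le ((Ordinal.le_bsup _ _ (ho.succ_lt hi)).trans_eq (hβl o ho).symm)
  set δ := β κ.ord with hδdef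
  have hκord : IsSuccLimit (κ.ord) := Cardinal.isSuccLimit_ord hκ
  have hδΛ : δ < Λ := (hβinv _ le_rfl).2
  have htδ : ht t < δ := (hβinv _ le_rfl).1
  have hβmono' : ∀ {a b : Ordinal}, a ≤ b → β a ≤ β b := by
    intro a b h
    rcases h.lt_or_eq with h' | h'
    · exact (hβmono _ _ h').le
    · rw [h']
  set gOf : Set T → Set T → Ordinal := fun S₁ S₂ =>
    sInf {γ' | {w | w ∈ S₁ ∧ t < w ∧ ht w = γ'} ≠ {w | w ∈ S₂ ∧ t < w ∧ ht w = γ'}} with hgOf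
  have key : ∀ i, i < κ.ord → ∃ z₁ z₂ : T, (t < z₁ ∧ ht z₁ = δ) ∧ (t < z₂ ∧ ht z₂ = δ) ∧
      β i ≤ gOf {w | w < z₁} {w | w < z₂} ∧
      gOf {w | w < z₁} {w | w < z₂} < β (Order.succ i) := by
    intro i hi
    obtain ⟨hγ1, hγ2⟩ := hβinv i hi.le
    set x := xF (β i) hγ1 hγ2 with hxdef
    have htx : t < x := hx1 _ _ _
    have hhtx : ht x = β i := hx2 _ _ _
    have hFeq : F (β i) = Order.succ ((β i) ⊔ ht (uF x)) := by
      rw [hF]; dsimp only; rw [dif_pos ⟨hγ1, hγ2⟩]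
    have hσsucc : ht (uF x) < β (Order.succ i) := by
      rw [hβs, hFeq]; exact le_sup_right.trans_lt (lt_succ _)
    have hsuccle : β (Order.succ i) ≤ δ := (hβmono _ _ (hκord.succ_lt hi)).le
    have hσδ : ht (uF x) < δ := hσsucc.trans_le hsuccle
    have hσδ' : ht (vF x) < δ := (huv x) ▸ hσδ
    set z₁ := zF (uF x) δ hσδ hδΛ with hz₁def
    set z₂ := zF (vF x) δ hσδ' hδΛ with hz₂def
    have huz : uF x < z₁ := hz1 _ _ _ _
    have hvz : vF x < z₂ := hz1 _ _ _ _
    have hxz₁ : x < z₁ := (hu x).trans huz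
    have hxz₂ : x < z₂ := (hv x).trans hvz
    have htz₁ : t < z₁ := htx.trans hxz₁
    have htz₂ : t < z₂ := htx.trans hxz₂
    have hqz₁ : qF x < z₁ := (hq x).trans huz
    have htq : t < qF x :=
      hht.lt_of_ht_lt (htx.trans (hu x)) (hq x) ((hht.lt_of_lt htx).trans (hxq x))
    have hqnz₂ : ¬ qF x < z₂ := fun hcon =>
      hqv x (hht.lt_of_ht_lt hcon hvz (by rw [← huv x]; exact hht.lt_of_lt (hq x)))
    have hmem : ht (qF x) ∈ {γ' : Ordinal |
        {w | w ∈ {w : T | w < z₁} ∧ t < w ∧ ht w = γ'} ≠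
        {w | w ∈ {w : T | w < z₂} ∧ t < w ∧ ht w = γ'}} := by
      intro heq
      have hq1 : qF x ∈ {w | w ∈ {w : T | w < z₁} ∧ t < w ∧ ht w = ht (qF x)} :=
        ⟨hqz₁, htq, rfl⟩
      rw [heq] at hq1
      exact hqnz₂ hq1.1
    refine ⟨z₁, z₂, ⟨htz₁, hz2 _ _ _ _⟩, ⟨htz₂, hz2 _ _ _ _⟩, ?_, ?_⟩
    · refine le_csInf ⟨_, hmem⟩ ?_
      intro b hb
      by_contra hblt
      push_neg at hblt
      apply hb
      ext w
      constructor
      · rintro ⟨hwz, htw, hw⟩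
        have hwx : w < x := hht.lt_of_ht_lt hwz hxz₁ (by rw [hw, hhtx]; exact hblt)
        exact ⟨(hwx.trans (hv x)).trans hvz, htw, hw⟩
      · rintro ⟨hwz, htw, hw⟩
        have hwx : w < x := hht.lt_of_ht_lt hwz hxz₂ (by rw [hw, hhtx]; exact hblt)
        exact ⟨(hwx.trans (hu x)).trans huz, htw, hw⟩
    · exact (csInf_le (OrderBot.bddBelow _) hmem).trans_lt
        ((hht.lt_of_lt (hq x)).trans hσsucc)
  choose Z₁ Z₂ hZ1 hZ2 hg1 hg2 using key
  set W := {S : Set T | ∃ z : T, t < z ∧ ht z = δ ∧ S = {w | w < z}} with hWdef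
  have hΦinj : ∀ i (hi : i < κ.ord) j (hj : j < κ.ord),
      {w : T | w < Z₁ i hi} = {w : T | w < Z₁ j hj} →
      {w : T | w < Z₂ i hi} = {w : T | w < Z₂ j hj} → i = j := by
    intro i hi j hj e1 e2
    rcases lt_trichotomy i j with h | h | h
    · have hle := hg1 j hj
      rw [← e1, ← e2] at hle
      exact absurd ((hg2 i hi).trans_le ((hβmono' (Order.succ_le_of_lt h)).trans hle))
        (lt_irrefl _)
    · exact h
    · have hle := hg1 i hi
      rw [e1, e2] at hle
      exact absurd ((hg2 j hj).trans_le ((hβmono' (Order.succ_le_of_lt h)).trans hle))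
        (lt_irrefl _)
  have hcard : κ ≤ #(↥W) * #(↥W) := by
    have hfinj : Function.Injective (fun b : (κ.ord).ToType =>
        ((⟨{w | w < Z₁ ((Ordinal.ToType.mk (o := κ.ord)).symm b).1
              ((Ordinal.ToType.mk (o := κ.ord)).symm b).2},
            Z₁ _ ((Ordinal.ToType.mk (o := κ.ord)).symm b).2,
            (hZ1 _ _).1, (hZ1 _ _).2, rfl⟩ : ↥W),
         (⟨{w | w < Z₂ ((Ordinal.ToType.mk (o := κ.ord)).symm b).1
              ((Ordinal.ToType.mk (o := κ.ord)).symm b).2},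
            Z₂ _ ((Ordinal.ToType.mk (o := κ.ord)).symm b).2,
            (hZ2 _ _).1, (hZ2 _ _).2, rfl⟩ : ↥W))) := by
      intro a b hab
      have e1 := congrArg (fun p => (p.1 : Set T)) hab
      have e2 := congrArg (fun p => (p.2 : Set T)) hab
      have := hΦinj _ ((Ordinal.ToType.mk (o := κ.ord)).symm a).2 _
        ((Ordinal.ToType.mk (o := κ.ord)).symm b).2 e1 e2
      have hsub : (Ordinal.ToType.mk (o := κ.ord)).symm a =
          (Ordinal.ToType.mk (o := κ.ord)).symm b := Subtype.ext this
      exact (Ordinal.ToType.mk (o := κ.ord)).symm.injective hsub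
    calc κ = (κ.ord).card := (card_ord κ).symm
      _ = #((κ.ord).ToType) := (Cardinal.mk_toType _).symm
      _ ≤ #(↥W × ↥W) := Cardinal.mk_le_of_injective hfinj
      _ = #(↥W) * #(↥W) := by simp [Cardinal.mk_prod]
  have hκW : κ ≤ #(↥W) := by
    rcases le_or_gt ℵ₀ #(↥W) with h | h
    · rwa [mul_eq_self h] at hcard
    · exact absurd (hcard.trans_lt (mul_lt_aleph0 h h)) (not_lt.2 hκ)
  have hWA : #(↥W) ≤ #{y : T // t < y ∧ ht y = δ} := by
    apply Cardinal.mk_le_of_surjective (f := fun (y : {y : T // t < y ∧ ht y = δ}) =>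
      (⟨{w | w < y.1}, y.1, y.2.1, y.2.2, rfl⟩ : ↥W))
    rintro ⟨S, z, h1, h2, rfl⟩
    exact ⟨⟨z, h1, h2⟩, rfl⟩
  have hinj2 : #{y : T // t < y ∧ ht y = δ} ≤ #{y : T // ht y = δ} :=
    Cardinal.mk_le_of_injective (f := fun y : {y : T // t < y ∧ ht y = δ} =>
      (⟨y.1, y.2.2⟩ : {y : T // ht y = δ}))
      (fun a b hab => Subtype.ext (congrArg (fun z : {y : T // ht y = δ} => z.val) hab))
  have hAκ : #{y : T // t < y ∧ ht y = δ} ≤ κ := hinj2.trans (hlevels_card δ)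
  exact ⟨δ, htδ, hδΛ, le_antisymm hAκ (hκW.trans hWA),
    le_antisymm (hlevels_card δ) ((hκW.trans hWA).trans hinj2)⟩
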